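/- arXiv:1701.07227 — 5 statements merged into one kernel-verified Lean document; each statement's English description precedes it below -/
import Mathlib

section
/- Let d ≥ 2 be a real number and k a positive integer. For nonnegative integers a_0, a_1, ..., a_k, consider the quantity S = Σ_{i=0}^{k} a_i · 2^{(k-i)/d} / (7+i)^{2/d}, subject to the constraint A = Σ_{i=0}^{k} a_i · 2^{k-i} being fixed with A ≥ 2. Then S is minimized over all such tuples only at tuples where a_1, ..., a_k ∈ {0,1}. More precisely: if a_i ≥ 2 for some i > 0, then replacing (a_{i-1}, a_i) by (a_{i-1}+1, a_i-2) preserves the constraint and strictly decreases S. -/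
open Finset

lemma key_rpow_ineq (d : ℝ) (hd : 2 ≤ d) (x : ℝ) (hx : 0 ≤ x) :
    (2 : ℝ) ^ (1 / d) * (8 + x) ^ (2 / d) < 2 * (7 + x) ^ (2 / d) := by
  have hd0 : (0 : ℝ) < d := lt_of_lt_of_le two_pos hd
  have h8 : (0 : ℝ) < 8 + x := by linarith
  have h7 : (0 : ℝ) < 7 + x := by linarith
  have h4 : (4 : ℝ) ≤ 2 ^ d := by
    have := Real.rpow_le_rpow_of_exponent_le (by norm_num : (1:ℝ) ≤ 2) hd
    rwa [show (2:ℝ) ^ (2:ℝ) = 4 by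
      rw [show (2:ℝ) = ((2:ℕ):ℝ) by norm_num, Real.rpow_natCast]; norm_num] at this
  have hbase : 2 * (8 + x) ^ (2 : ℕ) < 2 ^ d * (7 + x) ^ (2 : ℕ) := by
    have : 2 * (8 + x) ^ (2:ℕ) < 4 * (7 + x) ^ (2:ℕ) := by nlinarith
    have h7sq : (0:ℝ) < (7 + x) ^ (2:ℕ) := by positivity
    nlinarith
  have hlt := Real.rpow_lt_rpow (by positivity) hbase (by positivity : (0:ℝ) < 1 / d)
  have e1 : (2 * (8 + x) ^ (2:ℕ)) ^ (1 / d) = 2 ^ (1 / d) * (8 + x) ^ (2 / d) := by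
    rw [Real.mul_rpow (by norm_num) (by positivity), ← Real.rpow_natCast (8 + x) 2,
      ← Real.rpow_mul h8.le]
    norm_num [div_eq_mul_inv]
  have e2 : ((2 : ℝ) ^ d * (7 + x) ^ (2:ℕ)) ^ (1 / d) = 2 * (7 + x) ^ (2 / d) := by
    rw [Real.mul_rpow (by positivity) (by positivity), ← Real.rpow_natCast (7 + x) 2,
      ← Real.rpow_mul h7.le, ← Real.rpow_mul (by norm_num : (0:ℝ) ≤ 2),
      mul_one_div_cancel hd0.ne', Real.rpow_one]
    norm_num [div_eq_mul_inv]
  rwa [e1, e2] at hlt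

/-- the exchange move `(a_{i-1}, a_i) ↦ (a_{i-1}+1, a_i-2)` preserves the
constraint `A = Σ a_i · 2^{k-i}` and strictly decreases
`S = Σ a_i · 2^{(k-i)/d} / (7+i)^{2/d}`, for real `d ≥ 2`. -/
theorem exchange_move_decreases
    (d : ℝ) (hd : 2 ≤ d) (k : ℕ) (hk : 1 ≤ k)
    (a a' : ℕ → ℕ) (i : ℕ) (hi1 : 1 ≤ i) (hik : i ≤ k) (hai : 2 ≤ a i)
    (ha' : ∀ j, a' j = if j = i - 1 then a (i - 1) + 1
                       else if j = i then a i - 2 else a j) :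
    (∑ j ∈ range (k + 1), a' j * 2 ^ (k - j) = ∑ j ∈ range (k + 1), a j * 2 ^ (k - j)) ∧
    (∑ j ∈ range (k + 1), (a' j : ℝ) * (2 : ℝ) ^ (((k : ℝ) - j) / d) / ((7 + j : ℝ)) ^ (2 / d)
      < ∑ j ∈ range (k + 1), (a j : ℝ) * (2 : ℝ) ^ (((k : ℝ) - j) / d) / ((7 + j : ℝ)) ^ (2 / d)) := by
  have hd0 : (0 : ℝ) < d := lt_of_lt_of_le two_pos hd
  obtain ⟨m, rfl⟩ : ∃ m, i = m + 1 := ⟨i - 1, (Nat.succ_pred_eq_of_pos hi1).symm⟩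
  simp only [Nat.add_sub_cancel] at ha'
  have hm1 : m + 1 ≤ k := hik
  have hmm : m ∈ range (k + 1) := mem_range.mpr (by omega)
  have hmm1 : m + 1 ∈ range (k + 1) := mem_range.mpr (by omega)
  constructor
  · -- constraint preserved; work in ℤ
    have hz : ∀ j ∈ range (k + 1),
        ((a' j * 2 ^ (k - j) : ℕ) : ℤ)
          = ((a j * 2 ^ (k - j) : ℕ) : ℤ)
            + (if j = m then (2 : ℤ) ^ (k - j) else 0)
            - (if j = m + 1 then 2 * (2 : ℤ) ^ (k - j) else 0) := by
      intro j hj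
      rw [ha' j]
      by_cases h1 : j = m
      · simp only [h1, if_pos rfl, if_neg (show m ≠ m + 1 by omega)]
        push_cast; ring
      · by_cases h2 : j = m + 1
        · simp only [h2, if_neg (show m + 1 ≠ m by omega), if_pos rfl]
          have hc : ((a (m + 1) - 2 : ℕ) : ℤ) = (a (m + 1) : ℤ) - 2 := by omega
          push_cast [hc]; ring
        · simp [h1, h2]
    have hsum := Finset.sum_congr rfl hz
    rw [Finset.sum_sub_distrib, Finset.sum_add_distrib, Finset.sum_ite_eq' (range (k+1)) m,
      Finset.sum_ite_eq' (range (k+1)) (m+1), if_pos hmm, if_pos hmm1] at hsum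
    have hpow : (2 : ℤ) ^ (k - m) = 2 * 2 ^ (k - (m + 1)) := by
      rw [show k - m = (k - (m + 1)) + 1 by omega]; ring
    have : ((∑ j ∈ range (k + 1), a' j * 2 ^ (k - j) : ℕ) : ℤ)
        = ((∑ j ∈ range (k + 1), a j * 2 ^ (k - j) : ℕ) : ℤ) := by
      push_cast at hsum ⊢
      rw [hsum, hpow]; ring
    exact_mod_cast this
  · -- the real sum strictly decreases
    set w : ℕ → ℝ := fun j => (2 : ℝ) ^ (((k : ℝ) - j) / d) / ((7 + j : ℝ)) ^ (2 / d) with hw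
    have hz : ∀ j ∈ range (k + 1),
        (a' j : ℝ) * (2 : ℝ) ^ (((k : ℝ) - j) / d) / ((7 + j : ℝ)) ^ (2 / d)
          = (a j : ℝ) * (2 : ℝ) ^ (((k : ℝ) - j) / d) / ((7 + j : ℝ)) ^ (2 / d)
            + (if j = m then w j else 0) - (if j = m + 1 then 2 * w j else 0) := by
      intro j hj
      rw [ha' j]
      by_cases h1 : j = m
      · simp only [h1, if_pos rfl, if_neg (show m ≠ m + 1 by omega), hw]
        push_cast; ring
      · by_cases h2 : j = m + 1
        · simp only [h2, if_neg (show m + 1 ≠ m by omega), if_pos rfl, hw]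
          have hc : ((a (m + 1) - 2 : ℕ) : ℝ) = (a (m + 1) : ℝ) - 2 := by
            rw [Nat.cast_sub hai]; norm_num
          simp only [eq_self_iff_true, if_true, hc]; ring
        · simp [h1, h2]
    rw [Finset.sum_congr rfl hz, Finset.sum_sub_distrib, Finset.sum_add_distrib,
      Finset.sum_ite_eq' (range (k+1)) m, Finset.sum_ite_eq' (range (k+1)) (m+1),
      if_pos hmm, if_pos hmm1]
    have hkey : w m < 2 * w (m + 1) := by
      have h7 : (0 : ℝ) < 7 + (m : ℝ) := by positivity
      have h8 : (0 : ℝ) < 8 + (m : ℝ) := by positivity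
      have hden7 : (0 : ℝ) < ((7 : ℝ) + m) ^ (2 / d) := Real.rpow_pos_of_pos h7 _
      have hden8 : (0 : ℝ) < ((8 : ℝ) + m) ^ (2 / d) := Real.rpow_pos_of_pos h8 _
      have hw1 : w m = (2 : ℝ) ^ (((k : ℝ) - m) / d) / ((7 : ℝ) + m) ^ (2 / d) := rfl
      have hw2 : w (m + 1)
          = (2 : ℝ) ^ (((k : ℝ) - m - 1) / d) / ((8 : ℝ) + m) ^ (2 / d) := by
        simp only [hw]; push_cast; ring_nf
      have hexp : ((k : ℝ) - m) / d = ((k : ℝ) - m - 1) / d + 1 / d := by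
        field_simp
        ring
      rw [hw1, hw2, ← mul_div_assoc, div_lt_div_iff₀ hden7 hden8, hexp,
        Real.rpow_add two_pos]
      have ht : (0 : ℝ) < (2 : ℝ) ^ (((k : ℝ) - m - 1) / d) := Real.rpow_pos_of_pos two_pos _
      have hk2 := key_rpow_ineq d hd (m : ℝ) (Nat.cast_nonneg m)
      nlinarith [mul_lt_mul_of_pos_left hk2 ht]
    linarith
end

section
/- Let d ≥ 2 be a real number and k ≥ 2 an integer. Suppose a_0, a_1, ..., a_k are nonnegative integers with a_0·2^k + a_1·2^{k-1} + ... + a_k ≥ 2^{k-2}. Then Σ_{i=0}^{k} a_i · 2^{(k-i)/d} / (1+i)^{2/d} ≥ 2^{(k-2)/d} / 9. -/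
open Finset

private lemma nat_sq_bound : ∀ n : ℕ, (n + 3) ^ 2 ≤ 81 * 2 ^ n := by
  intro n
  induction n with
  | zero => norm_num
  | succ m ih =>
    have h1 : (1:ℕ) ≤ 2 ^ m := Nat.one_le_two_pow
    have hstep : (m + 1 + 3) ^ 2 ≤ 2 * (m + 3) ^ 2 := by
      have e1 : (m + 1 + 3) ^ 2 = m * m + 8 * m + 16 := by ring
      have e2 : 2 * (m + 3) ^ 2 = 2 * (m * m) + 12 * m + 18 := by ring
      rw [e1, e2]; omega
    calc (m + 1 + 3) ^ 2 ≤ 2 * (m + 3) ^ 2 := hstep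
      _ ≤ 2 * (81 * 2 ^ m) := by omega
      _ = 81 * 2 ^ (m + 1) := by ring

private lemma lemA (d : ℝ) (hd : 2 ≤ d) (i : ℕ) :
    ((1 : ℝ) + i) ^ (2 / d) ≤ 9 * (2 : ℝ) ^ (((i : ℝ) - 2) * (1 - 1 / d)) := by
  have hd0 : (0:ℝ) < d := lt_of_lt_of_le two_pos hd
  have hbase : (1:ℝ) ≤ 1 + i := le_add_of_nonneg_right (Nat.cast_nonneg i)
  have hexp : 2 / d ≤ 1 := by
    rw [div_le_one hd0]; linarith
  have h1 : ((1 : ℝ) + i) ^ (2 / d) ≤ ((1 : ℝ) + i) ^ (1 : ℝ) :=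
    Real.rpow_le_rpow_of_exponent_le hbase hexp
  rw [Real.rpow_one] at h1
  refine h1.trans ?_
  have hinv : 1 / d ≤ 1 / 2 := by
    apply div_le_div_of_nonneg_left (by norm_num) two_pos hd
  have hinv0 : (0:ℝ) < 1 / d := by positivity
  rcases lt_or_ge i 2 with hi | hi
  · -- i = 0 or 1
    have hi1 : (i : ℝ) ≤ 1 := by exact_mod_cast Nat.lt_succ_iff.mp hi
    have hprod : (0:ℝ) ≤ (2 - (i:ℝ)) * (1 / d) :=
      mul_nonneg (by linarith) hinv0.le
    have hie : (i : ℝ) - 2 ≤ ((i : ℝ) - 2) * (1 - 1 / d) := by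
      have hexpand : ((i : ℝ) - 2) * (1 - 1 / d)
          = ((i : ℝ) - 2) + (2 - (i:ℝ)) * (1 / d) := by ring
      linarith [hprod, hexpand.ge, hexpand.le]
    have hm2 : (-2 : ℝ) ≤ (i : ℝ) - 2 := by
      have : (0:ℝ) ≤ i := Nat.cast_nonneg i
      linarith
    have h2 : (2:ℝ) ^ (-2 : ℝ) ≤ (2:ℝ) ^ (((i : ℝ) - 2) * (1 - 1 / d)) :=
      Real.rpow_le_rpow_of_exponent_le one_le_two (hm2.trans hie)
    have h3 : (2:ℝ) ^ (-2 : ℝ) = 1 / 4 := by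
      rw [show (-2:ℝ) = ((-2:ℤ):ℝ) by norm_num, Real.rpow_intCast]
      norm_num
    nlinarith
  · -- 2 ≤ i ; set n = i - 2
    obtain ⟨n, rfl⟩ : ∃ n, i = n + 2 := ⟨i - 2, by omega⟩
    have hcast : ((n + 2 : ℕ) : ℝ) - 2 = (n : ℝ) := by push_cast; ring
    rw [hcast]
    have hhalf : (n : ℝ) / 2 ≤ (n : ℝ) * (1 - 1 / d) := by
      have hn0 : (0:ℝ) ≤ (n:ℝ) := Nat.cast_nonneg n
      nlinarith
    have h2 : (2:ℝ) ^ ((n:ℝ) / 2) ≤ (2:ℝ) ^ ((n:ℝ) * (1 - 1 / d)) :=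
      Real.rpow_le_rpow_of_exponent_le one_le_two hhalf
    have key : (1 : ℝ) + (n + 2 : ℕ) ≤ 9 * (2:ℝ) ^ ((n:ℝ) / 2) := by
      have hpos : (0:ℝ) ≤ 9 * (2:ℝ) ^ ((n:ℝ) / 2) := by positivity
      have hL : (0:ℝ) ≤ (1 : ℝ) + (n + 2 : ℕ) := by positivity
      have hsq : ((1 : ℝ) + (n + 2 : ℕ)) ^ 2 ≤ (9 * (2:ℝ) ^ ((n:ℝ) / 2)) ^ 2 := by
        have hsq2 : ((2:ℝ) ^ ((n:ℝ) / 2)) ^ 2 = (2:ℝ) ^ (n:ℝ) := by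
          rw [sq, ← Real.rpow_add two_pos]
          congr 1
          ring
        have hr : (9 * (2:ℝ) ^ ((n:ℝ) / 2)) ^ 2 = 81 * (2:ℝ) ^ (n:ℝ) := by
          rw [mul_pow, hsq2]; norm_num
        rw [hr, Real.rpow_natCast]
        have hnat := nat_sq_bound n
        have hcast2 : ((n:ℝ) + 3) ^ 2 ≤ 81 * (2:ℝ) ^ n := by exact_mod_cast hnat
        push_cast
        nlinarith [hcast2]
      calc (1 : ℝ) + (n + 2 : ℕ) = Real.sqrt (((1 : ℝ) + (n + 2 : ℕ)) ^ 2) :=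
            (Real.sqrt_sq hL).symm
        _ ≤ Real.sqrt ((9 * (2:ℝ) ^ ((n:ℝ) / 2)) ^ 2) := Real.sqrt_le_sqrt hsq
        _ = 9 * (2:ℝ) ^ ((n:ℝ) / 2) := Real.sqrt_sq hpos
    nlinarith [key, h2]

private lemma core (d : ℝ) (hd : 2 ≤ d) (i : ℕ) (A B : ℝ) (hAB : A - B = (i : ℝ) - 2) :
    (2:ℝ) ^ (A / d) / 9 / (2:ℝ) ^ A * (2:ℝ) ^ B
      ≤ (2:ℝ) ^ (B / d) / ((1 + i : ℝ)) ^ (2 / d) := by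
  have hd0 : (0:ℝ) < d := lt_of_lt_of_le two_pos hd
  have hA := lemA d hd i
  have hip : (0:ℝ) < (1 + i : ℝ) := by positivity
  have hipp : (0:ℝ) < ((1 + i : ℝ)) ^ (2 / d) := Real.rpow_pos_of_pos hip _
  rw [div_div, div_mul_eq_mul_div, div_le_div_iff₀ (by positivity) hipp]
  have hmul : (2:ℝ) ^ (A / d) * (2:ℝ) ^ B * ((1 + i : ℝ)) ^ (2 / d)
      ≤ (2:ℝ) ^ (A / d) * (2:ℝ) ^ B * (9 * (2:ℝ) ^ (((i : ℝ) - 2) * (1 - 1 / d))) := by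
    apply mul_le_mul_of_nonneg_left hA (by positivity)
  refine hmul.trans (le_of_eq ?_)
  have hexp : A / d + B + ((i : ℝ) - 2) * (1 - 1 / d) = B / d + A := by
    rw [← hAB]; field_simp; ring
  rw [show (2:ℝ) ^ (A / d) * (2:ℝ) ^ B * (9 * (2:ℝ) ^ (((i : ℝ) - 2) * (1 - 1 / d)))
      = 9 * ((2:ℝ) ^ (A / d) * (2:ℝ) ^ B * (2:ℝ) ^ (((i : ℝ) - 2) * (1 - 1 / d))) by ring,
    ← Real.rpow_add two_pos, ← Real.rpow_add two_pos, hexp, Real.rpow_add two_pos]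
  ring

/-- if nonnegative integers `a_0, …, a_k` satisfy
`Σ a_i · 2^{k-i} ≥ 2^{k-2}`, then for real `d ≥ 2`,
`Σ a_i · 2^{(k-i)/d} / (1+i)^{2/d} ≥ 2^{(k-2)/d} / 9`. -/
theorem weighted_sum_lower_bound
    (d : ℝ) (hd : 2 ≤ d) (k : ℕ) (hk : 2 ≤ k) (a : ℕ → ℕ)
    (hA : 2 ^ (k - 2) ≤ ∑ i ∈ range (k + 1), a i * 2 ^ (k - i)) :
    (2 : ℝ) ^ (((k : ℝ) - 2) / d) / 9
      ≤ ∑ i ∈ range (k + 1), (a i : ℝ) * (2 : ℝ) ^ (((k : ℝ) - i) / d) / ((1 + i : ℝ)) ^ (2 / d) := by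
  set C : ℝ := (2:ℝ) ^ (((k : ℝ) - 2) / d) / 9 / (2:ℝ) ^ ((k : ℝ) - 2) with hC
  have hC0 : 0 ≤ C := by rw [hC]; positivity
  have hterm : ∀ i ∈ range (k + 1),
      C * ((a i * 2 ^ (k - i) : ℕ) : ℝ)
        ≤ (a i : ℝ) * (2 : ℝ) ^ (((k : ℝ) - i) / d) / ((1 + i : ℝ)) ^ (2 / d) := by
    intro i hi
    have hik : i ≤ k := by
      have := mem_range.mp hi; omega
    have hpow : ((2 ^ (k - i) : ℕ) : ℝ) = (2:ℝ) ^ ((k : ℝ) - i) := by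
      rw [Nat.cast_pow, Nat.cast_ofNat, ← Real.rpow_natCast (2:ℝ) (k - i),
        Nat.cast_sub hik]
    have hcore := core d hd i ((k:ℝ) - 2) ((k:ℝ) - i) (by ring)
    calc C * ((a i * 2 ^ (k - i) : ℕ) : ℝ)
        = (a i : ℝ) * (C * (2:ℝ) ^ ((k : ℝ) - i)) := by
          push_cast [hpow]; ring
      _ ≤ (a i : ℝ) * ((2:ℝ) ^ (((k : ℝ) - i) / d) / ((1 + i : ℝ)) ^ (2 / d)) := by
          apply mul_le_mul_of_nonneg_left hcore (Nat.cast_nonneg _)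
      _ = (a i : ℝ) * (2 : ℝ) ^ (((k : ℝ) - i) / d) / ((1 + i : ℝ)) ^ (2 / d) := by
          ring
  have hsum : C * ((∑ i ∈ range (k + 1), a i * 2 ^ (k - i) : ℕ) : ℝ)
      ≤ ∑ i ∈ range (k + 1), (a i : ℝ) * (2 : ℝ) ^ (((k : ℝ) - i) / d) / ((1 + i : ℝ)) ^ (2 / d) := by
    rw [Nat.cast_sum, mul_sum]
    exact sum_le_sum hterm
  have hlow : C * ((2 ^ (k - 2) : ℕ) : ℝ)
      ≤ C * ((∑ i ∈ range (k + 1), a i * 2 ^ (k - i) : ℕ) : ℝ) := by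
    apply mul_le_mul_of_nonneg_left _ hC0
    exact_mod_cast hA
  have hfin : C * ((2 ^ (k - 2) : ℕ) : ℝ) = (2 : ℝ) ^ (((k : ℝ) - 2) / d) / 9 := by
    have hpow : ((2 ^ (k - 2) : ℕ) : ℝ) = (2:ℝ) ^ ((k : ℝ) - 2) := by
      rw [Nat.cast_pow, Nat.cast_ofNat, ← Real.rpow_natCast (2:ℝ) (k - 2),
        Nat.cast_sub hk]
      norm_num
    rw [hpow, hC, div_mul_cancel₀]
    positivity
  linarith [hlow.trans hsum, hfin]
end

section
/- Let (X, dist, μ) be an Ahlfors (c_1, c_2, d)-regular metric measure space, and let η > 0, s ≥ 1, α > 0. Suppose S_1, ..., S_K ⊆ X are η-round Borel sets such that every point of X belongs to at most s of the sets S_i, and there exists x ∈ X with max_i dist(x, S_i) < α · min_i diam(S_i). Then K ≤ s · (c_2/(c_1 η)) · (1+2α)^d. -/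
open Metric MeasureTheory
open ENNReal Filter


private lemma sum_measure_inter_le {X : Type*} [MeasurableSpace X] (μ : Measure X)
    {K s : ℕ} (S : Fin K → Set X) (hmeas : ∀ i, MeasurableSet (S i))
    (hmult : ∀ x : X, ({i | x ∈ S i} : Set (Fin K)).ncard ≤ s)
    (B : Set X) :
    ∑ i, μ (S i ∩ B) ≤ (s : ℝ≥0∞) * μ B := by
  classical
  have h1 : ∀ i : Fin K, μ (S i ∩ B) = ∫⁻ a in B, (S i).indicator 1 a ∂μ := by
    intro i
    rw [lintegral_indicator_one (hmeas i), Measure.restrict_apply (hmeas i)]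
  calc ∑ i, μ (S i ∩ B) = ∫⁻ a in B, ∑ i, (S i).indicator 1 a ∂μ := by
        simp_rw [h1]
        exact (lintegral_finset_sum _ fun i _ => measurable_one.indicator (hmeas i)).symm
    _ ≤ ∫⁻ _ in B, (s : ℝ≥0∞) ∂μ := by
        refine lintegral_mono fun a => ?_
        have hset : ({i | a ∈ S i} : Set (Fin K)) = ↑(Finset.univ.filter fun i => a ∈ S i) := by
          ext i; simp
        have hcard : (Finset.univ.filter fun i => a ∈ S i).card ≤ s := by
          have := hmult a; rwa [hset, Set.ncard_coe_finset] at this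
        calc ∑ i, (S i).indicator (1 : X → ℝ≥0∞) a
            = ((Finset.univ.filter fun i => a ∈ S i).card : ℝ≥0∞) := by
              simp [Set.indicator_apply, Finset.sum_boole]
          _ ≤ (s : ℝ≥0∞) := by exact_mod_cast hcard
    _ = (s : ℝ≥0∞) * μ B := by rw [setLIntegral_const]

private lemma upper_reg_aux {X : Type*} [MetricSpace X] [MeasurableSpace X] (μ : Measure X)
    (c2 d : ℝ) (hc2 : 0 ≤ c2) (hd : 0 ≤ d)
    (hreg : ∀ (x : X) (R : ℝ), 0 ≤ R →
      ENNReal.ofReal R ≤ EMetric.diam (Set.univ : Set X) →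
      μ (closedBall x R) ≤ ENNReal.ofReal (c2 * R ^ d))
    (x : X) (R : ℝ) (hR : 0 ≤ R) :
    μ (closedBall x R) ≤ ENNReal.ofReal (c2 * R ^ d) := by
  by_cases h : ENNReal.ofReal R ≤ EMetric.diam (Set.univ : Set X)
  · exact hreg x R hR h
  · push_neg at h
    have hfin : EMetric.diam (Set.univ : Set X) ≠ ⊤ := (h.trans ENNReal.ofReal_lt_top).ne
    set Dx := Metric.diam (Set.univ : Set X) with hDx
    have hDx0 : 0 ≤ Dx := diam_nonneg
    have hofDx : ENNReal.ofReal Dx = EMetric.diam (Set.univ : Set X) := ENNReal.ofReal_toReal hfin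
    have hDxR : Dx ≤ R := by
      have : ENNReal.ofReal Dx < ENNReal.ofReal R := by rw [hofDx]; exact h
      exact ((ENNReal.ofReal_lt_ofReal_iff_of_nonneg hDx0).1 this).le
    have hbd : Bornology.IsBounded (Set.univ : Set X) := Metric.isBounded_iff_ediam_ne_top.2 hfin
    have hsub : closedBall x R ⊆ closedBall x Dx := fun z _ =>
      mem_closedBall.2 (dist_le_diam_of_mem hbd (Set.mem_univ z) (Set.mem_univ x))
    calc μ (closedBall x R) ≤ μ (closedBall x Dx) := measure_mono hsub
      _ ≤ ENNReal.ofReal (c2 * Dx ^ d) := hreg x Dx hDx0 hofDx.le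
      _ ≤ ENNReal.ofReal (c2 * R ^ d) := by
          exact ENNReal.ofReal_le_ofReal
            (mul_le_mul_of_nonneg_left (Real.rpow_le_rpow hDx0 hDxR hd) hc2)

/-- in an Ahlfors `(c₁,c₂,d)`-regular space, at most
`s·(c₂/(c₁η))·(1+2α)^d` pairwise boundedly-overlapping `η`-round sets can all come
`α`-close (relative to their diameters) to a single point `x`. -/
theorem round_sets_near_point_bound
    {X : Type*} [MetricSpace X] [MeasurableSpace X] (μ : Measure X)
    (c1 c2 d η α : ℝ) (s K : ℕ)
    (hc1 : 0 < c1) (hc2 : 0 < c2) (hd : 0 < d) (hη : 0 < η) (hα : 0 < α)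
    (hs : 1 ≤ s) (hK : 1 ≤ K)
    (hreg : ∀ (x : X) (R : ℝ), 0 ≤ R →
      ENNReal.ofReal R ≤ EMetric.diam (Set.univ : Set X) →
      ENNReal.ofReal (c1 * R ^ d) ≤ μ (closedBall x R) ∧
      μ (closedBall x R) ≤ ENNReal.ofReal (c2 * R ^ d))
    (S : Fin K → Set X) (hmeas : ∀ i, MeasurableSet (S i))
    (hround : ∀ i, ∀ y ∈ closure (S i), ∀ ρ : ℝ, ¬ S i ⊆ closedBall y ρ →
      ENNReal.ofReal η * μ (closedBall y ρ) ≤ μ (S i ∩ closedBall y ρ))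
    (hmult : ∀ x : X, ({i | x ∈ S i} : Set (Fin K)).ncard ≤ s)
    (x : X)
    (hnear : ∀ i j : Fin K, infDist x (S i) < α * diam (S j)) :
    (K : ℝ) ≤ s * (c2 / (c1 * η)) * (1 + 2 * α) ^ d := by
  have hKpos : 0 < K := hK
  haveI : NeZero K := ⟨hKpos.ne'⟩
  -- minimal diameter
  obtain ⟨i₀, -, hmin⟩ := Finset.exists_min_image (Finset.univ : Finset (Fin K))
    (fun i => diam (S i)) ⟨⟨0, hKpos⟩, Finset.mem_univ _⟩
  set Dm := diam (S i₀) with hDm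
  have hDmle : ∀ j, Dm ≤ diam (S j) := fun j => hmin j (Finset.mem_univ j)
  have hDmpos : 0 < Dm := by
    have h0 := hnear i₀ i₀
    have := infDist_nonneg (x := x) (s := S i₀)
    nlinarith
  -- pick points y i ∈ S i close to x
  have hy : ∀ i : Fin K, ∃ y ∈ S i, dist x y < α * Dm := by
    intro i
    have hne : (S i).Nonempty := by
      by_contra hemp
      rw [Set.not_nonempty_iff_eq_empty] at hemp
      have := hDmle i
      rw [hemp, diam_empty] at this
      linarith
    exact (infDist_lt_iff hne).1 (hnear i i₀)
  choose y hyS hyd using hy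
  set r : ℝ := Dm / 2 with hr
  have hrpos : 0 < r := by positivity
  set R : ℝ := r + α * Dm with hR
  have hRpos : 0 < R := by positivity
  -- key inequality for every ρ ∈ (0, r)
  have hkey : ∀ ρ : ℝ, 0 < ρ → ρ < r →
      (K : ℝ) * η * c1 * ρ ^ d ≤ (s : ℝ) * c2 * R ^ d := by
    intro ρ hρ0 hρr
    have hρd : ENNReal.ofReal ρ ≤ EMetric.diam (Set.univ : Set X) := by
      calc ENNReal.ofReal ρ ≤ ENNReal.ofReal Dm := by
            apply ENNReal.ofReal_le_ofReal; linarith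
        _ ≤ EMetric.diam (S i₀) := ENNReal.ofReal_toReal_le
        _ ≤ EMetric.diam (Set.univ : Set X) := EMetric.diam_mono (Set.subset_univ _)
    have hstep : ∀ i : Fin K,
        ENNReal.ofReal η * ENNReal.ofReal (c1 * ρ ^ d) ≤ μ (S i ∩ closedBall x R) := by
      intro i
      have hns : ¬ S i ⊆ closedBall (y i) ρ := by
        intro hsub
        have := diam_le_of_subset_closedBall hρ0.le hsub
        have h2 := hDmle i
        have : Dm ≤ 2 * ρ := le_trans h2 this
        linarith
      have hballsub : closedBall (y i) ρ ⊆ closedBall x R := by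
        apply closedBall_subset_closedBall'
        have : dist (y i) x = dist x (y i) := dist_comm _ _
        rw [this]
        have := hyd i
        linarith
      calc ENNReal.ofReal η * ENNReal.ofReal (c1 * ρ ^ d)
          ≤ ENNReal.ofReal η * μ (closedBall (y i) ρ) :=
            mul_le_mul_right (hreg (y i) ρ hρ0.le hρd).1 _
        _ ≤ μ (S i ∩ closedBall (y i) ρ) :=
            hround i (y i) (subset_closure (hyS i)) ρ hns
        _ ≤ μ (S i ∩ closedBall x R) :=
            measure_mono (Set.inter_subset_inter_right _ hballsub)
    have hsum : (K : ℝ≥0∞) * (ENNReal.ofReal η * ENNReal.ofReal (c1 * ρ ^ d))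
        ≤ (s : ℝ≥0∞) * μ (closedBall x R) := by
      calc (K : ℝ≥0∞) * (ENNReal.ofReal η * ENNReal.ofReal (c1 * ρ ^ d))
          = ∑ _i : Fin K, ENNReal.ofReal η * ENNReal.ofReal (c1 * ρ ^ d) := by
            simp [Finset.sum_const, mul_comm]
        _ ≤ ∑ i, μ (S i ∩ closedBall x R) := Finset.sum_le_sum fun i _ => hstep i
        _ ≤ (s : ℝ≥0∞) * μ (closedBall x R) :=
            sum_measure_inter_le μ S hmeas hmult _
    have hupper : μ (closedBall x R) ≤ ENNReal.ofReal (c2 * R ^ d) :=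
      upper_reg_aux μ c2 d hc2.le hd.le (fun z r' h1 h2 => (hreg z r' h1 h2).2) x R hRpos.le
    have hEN : ENNReal.ofReal ((K : ℝ) * (η * (c1 * ρ ^ d)))
        ≤ ENNReal.ofReal ((s : ℝ) * (c2 * R ^ d)) := by
      rw [ENNReal.ofReal_mul (by positivity : (0:ℝ) ≤ (K:ℝ)),
        ENNReal.ofReal_mul (by positivity : (0:ℝ) ≤ η),
        ENNReal.ofReal_mul (by positivity : (0:ℝ) ≤ (s:ℝ)),
        ENNReal.ofReal_natCast, ENNReal.ofReal_natCast]
      exact le_trans hsum (mul_le_mul_right hupper _)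
    have hreal : (K : ℝ) * (η * (c1 * ρ ^ d)) ≤ (s : ℝ) * (c2 * R ^ d) :=
      (ENNReal.ofReal_le_ofReal_iff (by positivity)).1 hEN
    nlinarith [hreal]
  -- pass to the limit ρ → r⁻
  have hlim : (K : ℝ) * η * c1 * r ^ d ≤ (s : ℝ) * c2 * R ^ d := by
    have hcont : ContinuousAt (fun ρ : ℝ => (K : ℝ) * η * c1 * ρ ^ d) r :=
      (Real.continuousAt_rpow_const r d (Or.inl hrpos.ne')).const_mul _
    have htend : Tendsto (fun ρ : ℝ => (K : ℝ) * η * c1 * ρ ^ d) (nhdsWithin r (Set.Iio r))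
        (nhds ((K : ℝ) * η * c1 * r ^ d)) :=
      hcont.continuousWithinAt.tendsto
    refine le_of_tendsto htend ?_
    filter_upwards [Ioo_mem_nhdsLT_of_mem (Set.mem_Ioc.2 ⟨hrpos, le_refl r⟩)] with ρ hρ
    exact hkey ρ hρ.1 hρ.2
  -- final algebra
  have hRfact : R ^ d = (1 + 2 * α) ^ d * r ^ d := by
    have h1 : R = (1 + 2 * α) * r := by rw [hR, hr]; ring
    rw [h1, Real.mul_rpow (by positivity) hrpos.le]
  have hrd : 0 < r ^ d := Real.rpow_pos_of_pos hrpos d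
  have hQ : 0 < (1 + 2 * α) ^ d := Real.rpow_pos_of_pos (by linarith) d
  rw [hRfact] at hlim
  have h2 : (K : ℝ) * η * c1 ≤ (s : ℝ) * c2 * (1 + 2 * α) ^ d :=
    le_of_mul_le_mul_right (by nlinarith [hlim]) hrd
  have hc1η : 0 < c1 * η := by positivity
  have heq : (s : ℝ) * (c2 / (c1 * η)) * (1 + 2 * α) ^ d
      = ((s : ℝ) * c2 * (1 + 2 * α) ^ d) / (c1 * η) := by ring
  rw [heq, le_div_iff₀ hc1η]
  nlinarith [h2]
end

section
/- Let f : X → Y be an η-quasisymmetric map. If S ⊆ X is a τ-quasi-ball (i.e., there exist x ∈ X and r > 0 with B(x,r) ⊆ S ⊆ B(x, τr)), then f(S) is a 2η(τ)-quasi-ball in Y. -/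
open Metric

/-- Tyson: the image of a `τ`-quasi-ball under an `η`-quasisymmetric
(surjective) map is a `2η(τ)`-quasi-ball. -/
theorem quasisymmetric_image_quasiball
    {X Y : Type*} [MetricSpace X] [MetricSpace Y] (f : X → Y)
    (hsurj : Function.Surjective f)
    (η : ℝ → ℝ)
    (hη_mono : StrictMono η) (hη_cont : Continuous η) (hη0 : η 0 = 0)
    (hη_surj : ∀ t : ℝ, 0 ≤ t → ∃ u : ℝ, 0 ≤ u ∧ η u = t)
    (hqs : ∀ x y z : X, x ≠ z →
      dist (f x) (f y) ≤ η (dist x y / dist x z) * dist (f x) (f z))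
    (τ : ℝ) (hτ : 1 ≤ τ) (S : Set X) (x : X) (r : ℝ) (hr : 0 < r)
    (h1 : closedBall x r ⊆ S) (h2 : S ⊆ closedBall x (τ * r)) :
    ∃ (y : Y) (ρ : ℝ), 0 < ρ ∧
      closedBall y ρ ⊆ f '' S ∧ f '' S ⊆ closedBall y (2 * η τ * ρ) := by
  have hτ0 : (0:ℝ) < τ := lt_of_lt_of_le one_pos hτ
  have hmono := hη_mono.monotone
  have hητ : 0 < η τ := hη0 ▸ hη_mono hτ0
  have hxS : x ∈ S := h1 (mem_closedBall_self hr.le)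
  by_cases hc : ∀ w, f w = f x
  · refine ⟨f x, 1, one_pos, ?_, ?_⟩
    · intro y' _
      obtain ⟨w, hw⟩ := hsurj y'
      exact ⟨x, hxS, by rw [← hw, hc w]⟩
    · rintro y' ⟨s, _, rfl⟩
      rw [mem_closedBall, hc s, dist_self]
      positivity
  · push_neg at hc
    obtain ⟨z, hz⟩ := hc
    have hzx : z ≠ x := fun h => hz (by rw [h])
    have hdz : 0 < dist x z := dist_pos.2 hzx.symm
    have hconst : ∀ s : X, s ≠ x → f s = f x → False := by
      intro s hs hfs
      apply hz
      have h := hqs x z s hs.symm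
      rw [hfs, dist_self, mul_zero] at h
      exact (dist_le_zero.1 h).symm
    set T : Set ℝ := (fun s => dist (f x) (f s)) '' S with hT
    have hTne : T.Nonempty := ⟨_, x, hxS, rfl⟩
    have hTbdd : BddAbove T := by
      refine ⟨η (τ * r / dist x z) * dist (f x) (f z), ?_⟩
      rintro t ⟨s, hs, rfl⟩
      calc dist (f x) (f s) ≤ η (dist x s / dist x z) * dist (f x) (f z) :=
            hqs x s z hzx.symm
        _ ≤ η (τ * r / dist x z) * dist (f x) (f z) := by
            apply mul_le_mul_of_nonneg_right _ dist_nonneg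
            apply hmono
            gcongr
            exact mem_closedBall'.1 (h2 hs)
    set L := sSup T with hLdef
    have hL0 : 0 ≤ L := by
      have h0 : (0:ℝ) ∈ T := ⟨x, hxS, by simp⟩
      exact le_csSup hTbdd h0
    have hmemL : ∀ s ∈ S, dist (f x) (f s) ≤ L := fun s hs => le_csSup hTbdd ⟨s, hs, rfl⟩
    by_cases hLpos : 0 < L
    · refine ⟨f x, L / (2 * η τ), by positivity, ?_, ?_⟩
      · intro y' hy'
        obtain ⟨w, hw⟩ := hsurj y'
        subst hw
        refine ⟨w, ?_, rfl⟩
        by_contra hwS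
        have hrw : r < dist x w := by
          by_contra h
          exact hwS (h1 (mem_closedBall'.2 (not_lt.1 h)))
        have hxw : x ≠ w := by
          intro h
          rw [← h, dist_self] at hrw
          exact absurd hrw (not_lt.2 hr.le)
        have key : ∀ s ∈ S, dist (f x) (f s) ≤ L / 2 := by
          intro s hs
          have h := hqs x s w hxw
          have h2' : dist x s / dist x w ≤ τ := by
            rw [div_le_iff₀ (lt_trans hr hrw)]
            calc dist x s ≤ τ * r := mem_closedBall'.1 (h2 hs)
              _ ≤ τ * dist x w := by nlinarith
          have hd : dist (f x) (f w) ≤ L / (2 * η τ) := by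
            rw [dist_comm]
            exact mem_closedBall.1 hy'
          calc dist (f x) (f s) ≤ η (dist x s / dist x w) * dist (f x) (f w) := h
            _ ≤ η τ * (L / (2 * η τ)) := mul_le_mul (hmono h2') hd dist_nonneg hητ.le
            _ = L / 2 := by field_simp
        have hhalf : L ≤ L / 2 :=
          csSup_le hTne (by rintro t ⟨s, hs, rfl⟩; exact key s hs)
        linarith
      · rintro y' ⟨s, hs, rfl⟩
        rw [mem_closedBall, dist_comm]
        calc dist (f x) (f s) ≤ L := hmemL s hs
          _ ≤ 2 * η τ * (L / (2 * η τ)) := by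
            rw [mul_div_cancel₀]
            positivity
    · have hLz : L = 0 := le_antisymm (not_lt.1 hLpos) hL0
      have hfS : ∀ s ∈ S, f s = f x := by
        intro s hs
        have h := hmemL s hs
        rw [hLz] at h
        exact (dist_le_zero.1 h).symm
      have hball : ∀ w, w ≠ x → r < dist x w := by
        intro w hw
        by_contra h
        exact hconst w hw (hfS w (h1 (mem_closedBall'.2 (not_lt.1 h))))
      have hdzr : 0 < dist x z / r := div_pos hdz hr
      have hηpos : 0 < η (dist x z / r) := hη0 ▸ hη_mono hdzr
      have hfz : 0 < dist (f x) (f z) := dist_pos.2 fun h => hz h.symm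
      set c := dist (f x) (f z) / η (dist x z / r) with hcdef
      have hcpos : 0 < c := div_pos hfz hηpos
      refine ⟨f x, c / 2, by positivity, ?_, ?_⟩
      · intro y' hy'
        obtain ⟨w, hw⟩ := hsurj y'
        by_cases hwx : f w = f x
        · exact ⟨x, hxS, by rw [← hw, hwx]⟩
        · exfalso
          have hwne : w ≠ x := fun h => hwx (by rw [h])
          have hrw := hball w hwne
          have h := hqs x z w (fun h => hwne h.symm)
          have hle : η (dist x z / dist x w) ≤ η (dist x z / r) := by
            apply hmono
            gcongr
          have hdw : dist (f x) (f w) ≤ c / 2 := by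
            rw [dist_comm, hw]
            exact mem_closedBall.1 hy'
          have hb : dist (f x) (f z) ≤ η (dist x z / r) * (c / 2) :=
            h.trans (mul_le_mul hle hdw dist_nonneg hηpos.le)
          have heq : η (dist x z / r) * (c / 2) = dist (f x) (f z) / 2 := by
            rw [hcdef]; field_simp
          rw [heq] at hb
          linarith
      · rintro y' ⟨s, hs, rfl⟩
        rw [mem_closedBall, hfS s hs, dist_self]
        positivity
end

section
/- Let V be a finite set with |V| = n, and let P be a bi-infinite hierarchical system of partitions {P_m : m ∈ ℤ} of a set X containing V, where each P_m refines P_{m+1}, and suppose there is m_0 such that every cell of P_{m_0} contains at most one point of V. Fix an integer s ≥ 1 and for a cell C ∈ P_m, define lev(C,m) as the largest j ∈ ℕ such that |(V ∩ C) \ C'| ≥ 2^j for all C' ∈ P_{m−s}. Then for every j ≥ 0, the number of pairs (C,m) with C ∈ P_m and lev(C,m) = j is at most 2s·n/2^j. -/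
open Set

/-- Benjamini–Schramm counting lemma: in a bi-infinite hierarchical system of
partitions of `X` in which some level separates the `n` points of `V`, the number of pairs
`(C, m)` with `C ∈ P m` whose level (largest `j` with `|(V ∩ C) \ C'| ≥ 2^j` for every cell
`C'` at level `m - s`) equals `j` is finite and at most `2·s·n/2^j`. -/
theorem hierarchical_level_count
    {X : Type*} (P : ℤ → Set (Set X)) (V : Finset X) (n s : ℕ)
    (hn : V.card = n) (hs : 1 ≤ s)
    (hpart : ∀ m : ℤ, ∀ x : X, ∃! C, C ∈ P m ∧ x ∈ C)
    (href : ∀ m : ℤ, ∀ C ∈ P m, ∃ C' ∈ P (m + 1), C ⊆ C')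
    (m0 : ℤ) (hm0 : ∀ C ∈ P m0, ((V : Set X) ∩ C).ncard ≤ 1)
    (levSet : Set X → ℤ → Set ℕ)
    (hlev : ∀ (C : Set X) (m : ℤ),
      levSet C m = {j : ℕ | ∀ C' ∈ P (m - s), 2 ^ j ≤ (((V : Set X) ∩ C) \ C').ncard})
    (j : ℕ) :
    {p : Set X × ℤ | p.1 ∈ P p.2 ∧ IsGreatest (levSet p.1 p.2) j}.Finite ∧
    {p : Set X × ℤ | p.1 ∈ P p.2 ∧ IsGreatest (levSet p.1 p.2) j}.ncard * 2 ^ j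
      ≤ 2 * s * n := by
  classical
  -- the cell of `P m` containing `x`
  set cell : ℤ → X → Set X := fun m x => (hpart m x).choose with hcelldef
  have hcellP : ∀ m x, cell m x ∈ P m := fun m x => (hpart m x).choose_spec.1.1
  have hcellmem : ∀ m x, x ∈ cell m x := fun m x => (hpart m x).choose_spec.1.2
  have hcelluniq : ∀ m (x : X) C, C ∈ P m → x ∈ C → C = cell m x := fun m x C hC hx =>
    (hpart m x).unique ⟨hC, hx⟩ ⟨hcellP m x, hcellmem m x⟩
  -- cells are monotone in the level
  have hstep : ∀ (x : X) (m : ℤ), cell m x ⊆ cell (m + 1) x := by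
    intro x m
    obtain ⟨C', hC', hsub⟩ := href m (cell m x) (hcellP m x)
    have hEq : C' = cell (m + 1) x := hcelluniq (m + 1) x C' hC' (hsub (hcellmem m x))
    exact hEq ▸ hsub
  have hmono : ∀ (x : X) (m m' : ℤ), m ≤ m' → cell m x ⊆ cell m' x := by
    intro x m
    refine Int.le_induction subset_rfl ?_
    intro k _ ih
    exact ih.trans (hstep x k)
  set nf : X → ℤ → ℕ := fun v m => ((V : Set X) ∩ cell m v).ncard with hnfdef
  have hnfmono : ∀ (v : X) (m m' : ℤ), m ≤ m' → nf v m ≤ nf v m' := fun v m m' h =>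
    Set.ncard_le_ncard (inter_subset_inter_right _ (hmono v m m' h))
      (V.finite_toSet.inter_of_left _)
  set Q : X → ℤ → Prop :=
    fun v m => 2 ^ j + nf v (m - s) ≤ nf v m ∧ nf v (m - s) < 2 ^ (j + 1) with hQdef
  have hsle : (0 : ℤ) ≤ (s : ℤ) := by positivity
  -- Step A: every pair of level exactly j has ≥ 2^j charged points
  have key : ∀ C m, C ∈ P m → IsGreatest (levSet C m) j →
      ∃ T : Set X, T.Finite ∧ 2 ^ j ≤ T.ncard ∧ ∀ v ∈ T, v ∈ V ∧ v ∈ C ∧ Q v m := by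
    intro C m hC hg
    have hjmem : ∀ C' ∈ P (m - s), 2 ^ j ≤ (((V : Set X) ∩ C) \ C').ncard := by
      have := hg.1; rw [hlev] at this; exact this
    have hub : ∃ C' ∈ P (m - s), (((V : Set X) ∩ C) \ C').ncard < 2 ^ (j + 1) := by
      by_contra hcon
      push_neg at hcon
      have : j + 1 ∈ levSet C m := by rw [hlev]; exact hcon
      exact absurd (hg.2 this) (by omega)
    obtain ⟨C', hC', hsmall⟩ := hub
    refine ⟨((V : Set X) ∩ C) \ C', (V.finite_toSet.inter_of_left C).diff,
      hjmem C' hC', ?_⟩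
    rintro v ⟨⟨hvV, hvC⟩, hvC'⟩
    refine ⟨hvV, hvC, ?_, ?_⟩
    · -- growth: 2^j + nf v (m-s) ≤ nf v m
      have hCeq : C = cell m v := hcelluniq m v C hC hvC
      have hDsub : cell (m - s) v ⊆ cell m v := hmono v (m - s) m (by omega)
      have hD2 : 2 ^ j ≤ (((V : Set X) ∩ C) \ cell (m - s) v).ncard :=
        hjmem _ (hcellP (m - s) v)
      have hVD : (V : Set X) ∩ cell (m - s) v ⊆ (V : Set X) ∩ C :=
        inter_subset_inter_right _ (hCeq ▸ hDsub)
      have hdiffeq : ((V : Set X) ∩ C) \ ((V : Set X) ∩ cell (m - s) v)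
          = ((V : Set X) ∩ C) \ cell (m - s) v := by
        ext x; simp only [mem_diff, mem_inter_iff]; tauto
      have hadd := Set.ncard_diff_add_ncard_of_subset hVD (V.finite_toSet.inter_of_left C)
      rw [hdiffeq] at hadd
      show 2 ^ j + ((V : Set X) ∩ cell (m - s) v).ncard ≤ ((V : Set X) ∩ cell m v).ncard
      rw [← hCeq]
      omega
    · -- smallness: nf v (m-s) < 2^(j+1)
      have hDsub : cell (m - s) v ⊆ cell m v := hmono v (m - s) m (by omega)
      have hCeq : C = cell m v := hcelluniq m v C hC hvC
      have hsub2 : (V : Set X) ∩ cell (m - s) v ⊆ ((V : Set X) ∩ C) \ C' := by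
        rintro x ⟨hxV, hxD⟩
        refine ⟨⟨hxV, hCeq ▸ hDsub hxD⟩, fun hxC' => ?_⟩
        have hEq : cell (m - s) v = C' :=
          (hpart (m - s) x).unique ⟨hcellP (m - s) v, hxD⟩ ⟨hC', hxC'⟩
        exact hvC' (hEq ▸ hcellmem (m - s) v)
      calc ((V : Set X) ∩ cell (m - s) v).ncard
          ≤ (((V : Set X) ∩ C) \ C').ncard :=
            Set.ncard_le_ncard hsub2 ((V.finite_toSet.inter_of_left C).diff)
        _ < 2 ^ (j + 1) := hsmall
  -- Step B: each point is charged at most 2s times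
  have hQcard : ∀ v : X, {m : ℤ | Q v m}.Finite ∧ {m : ℤ | Q v m}.ncard ≤ 2 * s := by
    intro v
    set f : ℤ → ℤ × Bool := fun m => (m % s, decide (2 ^ j ≤ nf v (m - s))) with hfdef
    set t : Finset (ℤ × Bool) := Finset.Ico (0 : ℤ) (s : ℤ) ×ˢ Finset.univ with htdef
    have hspos : (0 : ℤ) < (s : ℤ) := by exact_mod_cast hs
    have hmaps : ∀ m ∈ {m : ℤ | Q v m}, f m ∈ (↑t : Set (ℤ × Bool)) := by
      intro m _
      simp only [htdef, hfdef, Finset.coe_product, mem_prod, Finset.coe_univ, mem_univ,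
        and_true, Finset.mem_coe, Finset.mem_Ico]
      exact ⟨Int.emod_nonneg m (by omega), Int.emod_lt_of_pos m hspos⟩
    have hpow : (2 : ℕ) ^ (j + 1) = 2 ^ j + 2 ^ j := by rw [pow_succ]; ring
    have main : ∀ m1 m2, Q v m1 → Q v m2 → m1 < m2 → f m1 = f m2 → False := by
      intro m1 m2 h1 h2 hlt heq
      have hmod : m1 % (s : ℤ) = m2 % (s : ℤ) := congrArg Prod.fst heq
      have hdvd : (s : ℤ) ∣ m2 - m1 := Int.ModEq.dvd (hmod : Int.ModEq (s : ℤ) m1 m2)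
      have hge : (s : ℤ) ≤ m2 - m1 := Int.le_of_dvd (by omega) hdvd
      have hle : m1 ≤ m2 - s := by omega
      have hmono1 : nf v m1 ≤ nf v (m2 - s) := hnfmono v m1 (m2 - s) hle
      have hflag : (2 ^ j ≤ nf v (m1 - s)) ↔ (2 ^ j ≤ nf v (m2 - s)) := by
        have := congrArg Prod.snd heq
        simpa [hfdef, decide_eq_decide] using this
      have h2s : 2 ^ j ≤ nf v (m2 - s) := le_trans (le_trans (by omega) h1.1) hmono1
      have h1s : 2 ^ j ≤ nf v (m1 - s) := hflag.2 h2s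
      have : 2 ^ (j + 1) ≤ nf v (m2 - s) :=
        le_trans (by omega : 2 ^ (j + 1) ≤ 2 ^ j + nf v (m1 - s)) (le_trans h1.1 hmono1)
      exact absurd h2.2 (by omega)
    have hinj : InjOn f {m | Q v m} := by
      intro m1 hm1 m2 hm2 heq
      by_contra hne
      rcases lt_or_gt_of_ne hne with h | h
      · exact main m1 m2 hm1 hm2 h heq
      · exact main m2 m1 hm2 hm1 h heq.symm
    have hfin : {m : ℤ | Q v m}.Finite := by
      refine Set.Finite.of_finite_image ?_ hinj
      exact Set.Finite.subset t.finite_toSet (image_subset_iff.2 hmaps)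
    refine ⟨hfin, ?_⟩
    have := Set.ncard_le_ncard_of_injOn f hmaps hinj t.finite_toSet
    rw [Set.ncard_coe_finset] at this
    have htcard : t.card = 2 * s := by
      simp only [htdef, Finset.card_product, Int.card_Ico, Finset.card_univ]
      simp
      omega
    omega
  have hQfin : ∀ v : X, {m : ℤ | Q v m}.Finite := fun v => (hQcard v).1
  -- the charged set
  set Wf : Finset (X × ℤ) :=
    V.biUnion (fun v => (hQfin v).toFinset.image (fun m => (v, m))) with hWfdef
  have hWmem : ∀ (v : X) (m : ℤ), (v, m) ∈ Wf ↔ v ∈ V ∧ Q v m := by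
    intro v m
    simp only [hWfdef, Finset.mem_biUnion, Finset.mem_image, Set.Finite.mem_toFinset,
      mem_setOf_eq, Prod.mk.injEq]
    constructor
    · rintro ⟨a, haV, m', hm', rfl, rfl⟩; exact ⟨haV, hm'⟩
    · rintro ⟨hv, hq⟩; exact ⟨v, hv, m, hq, rfl, rfl⟩
  have hWcard : Wf.card ≤ n * (2 * s) := by
    calc Wf.card ≤ ∑ v ∈ V, ((hQfin v).toFinset.image (fun m => (v, m))).card :=
          Finset.card_biUnion_le
      _ ≤ ∑ _v ∈ V, 2 * s := by
          refine Finset.sum_le_sum fun v _ => le_trans Finset.card_image_le ?_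
          rw [← Set.ncard_eq_toFinset_card _ (hQfin v)]
          exact (hQcard v).2
      _ = n * (2 * s) := by rw [Finset.sum_const, hn, smul_eq_mul]
  set g : X × ℤ → Set X × ℤ := fun q => (cell q.2 q.1, q.2) with hgdef
  set S := {p : Set X × ℤ | p.1 ∈ P p.2 ∧ IsGreatest (levSet p.1 p.2) j} with hSdef
  have hSsub : S ⊆ ↑(Wf.image g) := by
    rintro ⟨C, m⟩ ⟨hC, hgr⟩
    obtain ⟨T, hTfin, hTcard, hT⟩ := key C m hC hgr
    have hTne : T.Nonempty := by
      refine Set.nonempty_of_ncard_ne_zero ?_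
      have : 0 < 2 ^ j := pow_pos (by norm_num) j
      omega
    obtain ⟨v, hv⟩ := hTne
    obtain ⟨hvV, hvC, hvQ⟩ := hT v hv
    simp only [Finset.coe_image, mem_image, Finset.mem_coe]
    refine ⟨(v, m), (hWmem v m).2 ⟨hvV, hvQ⟩, ?_⟩
    show (cell m v, m) = (C, m)
    rw [← hcelluniq m v C hC hvC]
  have hSfin : S.Finite := Set.Finite.subset (Wf.image g).finite_toSet hSsub
  refine ⟨hSfin, ?_⟩
  -- main counting
  set Sf := hSfin.toFinset with hSfdef
  have hmain : 2 ^ j * Sf.card ≤ (Wf.filter (fun q => g q ∈ Sf)).card := by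
    refine Finset.mul_card_image_le_card_of_maps_to (f := g) (fun q hq => ?_) (2 ^ j) ?_
    · exact (Finset.mem_filter.1 hq).2
    · intro p hp
      have hpS : p ∈ S := (Set.Finite.mem_toFinset hSfin).1 hp
      obtain ⟨C, m⟩ := p
      obtain ⟨hC, hgr⟩ := hpS
      obtain ⟨T, hTfin, hTcard, hT⟩ := key C m hC hgr
      have hsubim : hTfin.toFinset.image (fun v => (v, m)) ⊆
          (Wf.filter (fun q => g q ∈ Sf)).filter (fun q => g q = (C, m)) := by
        intro q hq
        simp only [Finset.mem_image, Set.Finite.mem_toFinset] at hq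
        obtain ⟨v, hvT, rfl⟩ := hq
        obtain ⟨hvV, hvC, hvQ⟩ := hT v hvT
        have hgeq : g (v, m) = (C, m) := by
          show (cell m v, m) = (C, m)
          rw [← hcelluniq m v C hC hvC]
        simp only [Finset.mem_filter]
        exact ⟨⟨(hWmem v m).2 ⟨hvV, hvQ⟩, hgeq ▸ hp⟩, hgeq⟩
      calc 2 ^ j ≤ T.ncard := hTcard
        _ = hTfin.toFinset.card := Set.ncard_eq_toFinset_card _ hTfin
        _ = (hTfin.toFinset.image (fun v => (v, m))).card := by
            rw [Finset.card_image_of_injective _ (fun a b h => (Prod.mk.injEq a m b m ▸ h).1)]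
        _ ≤ _ := Finset.card_le_card hsubim
  have hScard : S.ncard = Sf.card := Set.ncard_eq_toFinset_card _ hSfin
  have hfilter : (Wf.filter (fun q => g q ∈ Sf)).card ≤ Wf.card :=
    Finset.card_le_card (Finset.filter_subset _ _)
  calc S.ncard * 2 ^ j = 2 ^ j * Sf.card := by rw [hScard]; ring
    _ ≤ Wf.card := le_trans hmain hfilter
    _ ≤ n * (2 * s) := hWcard
    _ = 2 * s * n := by ring
end
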